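/- Let P be a partial order on {1,…,n} and w a weight on 𝔽_q, with associated weighted poset distance d_{(P,w)} on 𝔽_q^n. Then diam_{d_{(P,w)}}(B_{(P,w)}(x, D)) = D for every x ∈ 𝔽_q^n and every D in the image of ϖ_{(P,w)} if and only if P is a total (chain) order on {1,…,n} and w is non-archimedean (equivalently, d_{(P,w)} is a weighted chain distance which is an ultrametric). -/

import Mathlib

set_option linter.unusedSectionVars false

open scoped Classical

noncomputable section

variable {F : Type*} [Field F] [Fintype F]

def IsWeight (w : F → ℕ) : Prop :=
  (∀ a : F, w a = 0 ↔ a = 0) ∧ (∀ a : F, w (-a) = w a) ∧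
    (∀ a b : F, w (a + b) ≤ w a + w b)

def Mw (w : F → ℕ) : ℕ := Finset.univ.sup w

def mw (w : F → ℕ) : ℕ := sInf {s | ∃ a : F, a ≠ 0 ∧ w a = s}

def rho {n : ℕ} (u : Fin n → F) : ℕ :=
  (Finset.univ.filter fun j => u j ≠ 0).sup fun j => (j : ℕ) + 1

lemma rho_le {n : ℕ} (u : Fin n → F) : rho u ≤ n :=
  Finset.sup_le fun j _ => j.isLt

def chainWeight {n : ℕ} (w : F → ℕ) (u : Fin n → F) : ℕ :=
  if h : rho u = 0 then 0
  else w (u ⟨rho u - 1,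
        lt_of_lt_of_le (Nat.sub_lt (Nat.pos_of_ne_zero h) Nat.one_pos) (rho_le u)⟩)
      + (rho u - 1) * Mw w

def dChain {n : ℕ} (w : F → ℕ) (u v : Fin n → F) : ℕ := chainWeight w (u - v)

def ballW {n : ℕ} (w : F → ℕ) (x : Fin n → F) (r : ℕ) : Finset (Fin n → F) :=
  Finset.univ.filter fun v => dChain w x v ≤ r

def diamW {n : ℕ} (w : F → ℕ) (A : Finset (Fin n → F)) : ℕ :=
  (A ×ˢ A).sup fun p => dChain w p.1 p.2

def AstarW (w : F → ℕ) (n D : ℕ) : ℕ :=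
  Finset.univ.sup fun A : Finset (Fin n → F) => if diamW w A ≤ D then A.card else 0

def winv (w : F → ℕ) (S : ℕ) : Finset F :=
  Finset.univ.filter fun a => a ≠ 0 ∧ w a ≤ S

def dP {n : ℕ} (C : Finset (Fin n → F)) : ℕ :=
  sInf {s | ∃ x ∈ C, ∃ y ∈ C, x ≠ y ∧ rho (x - y) = s}

def dW {n : ℕ} (w : F → ℕ) (C : Finset (Fin n → F)) : ℕ :=
  sInf {s | ∃ x ∈ C, ∃ y ∈ C, x ≠ y ∧ dChain w x y = s}

def floorW (w : F → ℕ) (n D : ℕ) : ℕ :=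
  (Finset.univ.filter fun u : Fin n → F => chainWeight w u < D).sup (chainWeight w)

def nonArch (w : F → ℕ) : Prop := ∀ a b : F, w (a + b) ≤ max (w a) (w b)

def Sw (w : F → ℕ) : ℕ :=
  if nonArch w then Mw w
  else sInf {s | ∃ a b : F, max (w a) (w b) < w (a - b) ∧ max (w a) (w b) = s}

def WwCond (w : F → ℕ) (S : ℕ) (K : Finset F) : Prop :=
  (∀ a ∈ K, Sw w ≤ w a ∧ w a ≤ S) ∧
  (∀ a ∈ K, ∀ b : F, w b ≤ Sw w - 1 → w (a - b) ≤ S) ∧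
  (∀ a ∈ K, ∀ b ∈ K, w (a - b) ≤ S)

def WwCard (w : F → ℕ) (S : ℕ) : ℕ :=
  Finset.univ.sup fun K : Finset F => if WwCond w S K then K.card else 0

def idealOf {n : ℕ} (P : PartialOrder (Fin n)) (u : Fin n → F) : Finset (Fin n) :=
  Finset.univ.filter fun j => ∃ i : Fin n, u i ≠ 0 ∧ P.le j i

def maxOf {n : ℕ} (P : PartialOrder (Fin n)) (u : Fin n → F) : Finset (Fin n) :=
  (idealOf P u).filter fun j => ∀ k ∈ idealOf P u, P.le j k → j = k

def posetWeight {n : ℕ} (P : PartialOrder (Fin n)) (w : F → ℕ) (u : Fin n → F) : ℕ :=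
  (∑ i ∈ maxOf P u, w (u i)) + Mw w * ((idealOf P u) \ (maxOf P u)).card

def dPoset {n : ℕ} (P : PartialOrder (Fin n)) (w : F → ℕ) (u v : Fin n → F) : ℕ :=
  posetWeight P w (u - v)

def ballP {n : ℕ} (P : PartialOrder (Fin n)) (w : F → ℕ) (x : Fin n → F) (r : ℕ) :
    Finset (Fin n → F) :=
  Finset.univ.filter fun v => dPoset P w x v ≤ r

def diamP {n : ℕ} (P : PartialOrder (Fin n)) (w : F → ℕ) (A : Finset (Fin n → F)) : ℕ :=
  (A ×ˢ A).sup fun p => dPoset P w p.1 p.2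

end


section Helpers

open Finset

variable {F : Type*} [Field F] [Fintype F] {n : ℕ}

lemma w_le_Mw (w : F → ℕ) (a : F) : w a ≤ Mw w := Finset.le_sup (Finset.mem_univ a)

lemma one_le_w {w : F → ℕ} (hw : IsWeight w) {a : F} (ha : a ≠ 0) : 1 ≤ w a := by
  rcases Nat.eq_zero_or_pos (w a) with h | h
  · exact absurd ((hw.1 a).1 h) ha
  · exact h

noncomputable def dset {n : ℕ} (P : PartialOrder (Fin n)) (i : Fin n) : Finset (Fin n) :=
  Finset.univ.filter fun j => P.le j i

lemma mem_dset {P : PartialOrder (Fin n)} {i j : Fin n} : j ∈ dset P i ↔ P.le j i := by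
  simp [dset]

lemma self_mem_dset {P : PartialOrder (Fin n)} {i : Fin n} : i ∈ dset P i :=
  mem_dset.mpr (P.le_refl i)

lemma one_le_dset_card {P : PartialOrder (Fin n)} {i : Fin n} : 1 ≤ (dset P i).card :=
  Finset.card_pos.mpr ⟨i, self_mem_dset⟩

lemma dset_card_lt {P : PartialOrder (Fin n)} {i j : Fin n} (hij : P.le i j) (hne : i ≠ j) :
    (dset P i).card < (dset P j).card := by
  have hsub : dset P i ⊆ dset P j := fun k hk =>
    mem_dset.mpr (P.le_trans _ _ _ (mem_dset.mp hk) hij)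
  have hj : j ∉ dset P i := fun h => hne (P.le_antisymm _ _ hij (mem_dset.mp h))
  exact Finset.card_lt_card ((Finset.ssubset_iff_of_subset hsub).mpr ⟨j, self_mem_dset, hj⟩)

lemma mem_idealOf {P : PartialOrder (Fin n)} {u : Fin n → F} {j : Fin n} :
    j ∈ idealOf P u ↔ ∃ i, u i ≠ 0 ∧ P.le j i := by simp [idealOf]

lemma idealOf_zero (P : PartialOrder (Fin n)) : idealOf P (0 : Fin n → F) = ∅ := by
  ext j; simp [mem_idealOf]

lemma posetWeight_zero (P : PartialOrder (Fin n)) (w : F → ℕ) :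
    posetWeight P w (0 : Fin n → F) = 0 := by
  have h2 : maxOf P (0 : Fin n → F) = ∅ := by
    rw [maxOf, idealOf_zero]; rfl
  simp [posetWeight, h2, idealOf_zero]

lemma idealOf_neg (P : PartialOrder (Fin n)) (u : Fin n → F) :
    idealOf P (-u) = idealOf P u := by
  ext j; simp [mem_idealOf]

lemma maxOf_neg (P : PartialOrder (Fin n)) (u : Fin n → F) :
    maxOf P (-u) = maxOf P u := by
  rw [maxOf, maxOf, idealOf_neg]

lemma posetWeight_neg {w : F → ℕ} (hw : IsWeight w) (P : PartialOrder (Fin n)) (u : Fin n → F) :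
    posetWeight P w (-u) = posetWeight P w u := by
  unfold posetWeight
  rw [idealOf_neg, maxOf_neg]
  congr 1
  refine Finset.sum_congr rfl fun i _ => ?_
  rw [Pi.neg_apply]
  exact hw.2.1 (u i)

lemma maxOf_eq_singleton {P : PartialOrder (Fin n)} {u : Fin n → F} {i : Fin n}
    (h : idealOf P u = dset P i) : maxOf P u = {i} := by
  ext j
  simp only [maxOf, h, Finset.mem_filter, Finset.mem_singleton]
  constructor
  · rintro ⟨hj, hmax⟩
    exact hmax i self_mem_dset (mem_dset.mp hj)
  · rintro rfl
    exact ⟨self_mem_dset, fun k hk hjk => P.le_antisymm _ _ hjk (mem_dset.mp hk)⟩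

lemma posetWeight_of_top {P : PartialOrder (Fin n)} {w : F → ℕ} {u : Fin n → F} {i : Fin n}
    (h : idealOf P u = dset P i) :
    posetWeight P w u = w (u i) + Mw w * ((dset P i).card - 1) := by
  have hm := maxOf_eq_singleton h
  rw [posetWeight, hm, h, Finset.sum_singleton]
  congr 2
  rw [Finset.card_sdiff_of_subset (by simp [Finset.singleton_subset_iff, self_mem_dset]),
    Finset.card_singleton]

lemma idealOf_single {P : PartialOrder (Fin n)} {i : Fin n} {a : F} (ha : a ≠ 0) :
    idealOf P (Pi.single i a) = dset P i := by
  ext j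
  rw [mem_idealOf, mem_dset]
  constructor
  · rintro ⟨k, hk, hjk⟩
    by_cases hki : k = i
    · exact hki ▸ hjk
    · refine absurd ?_ hk
      exact Pi.single_eq_of_ne (M := fun _ : Fin n => F) hki a
  · intro hj
    exact ⟨i, by simp [Pi.single_eq_same, ha], hj⟩

lemma posetWeight_single {P : PartialOrder (Fin n)} {w : F → ℕ} {i : Fin n} {a : F} (ha : a ≠ 0) :
    posetWeight P w (Pi.single i a) = w a + Mw w * ((dset P i).card - 1) := by
  rw [posetWeight_of_top (idealOf_single ha), Pi.single_eq_same]

lemma exists_top {P : PartialOrder (Fin n)} (htot : ∀ i j : Fin n, P.le i j ∨ P.le j i)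
    (s : Finset (Fin n)) (hs : s.Nonempty) : ∃ i ∈ s, ∀ k ∈ s, P.le k i := by
  classical
  induction s using Finset.induction_on with
  | empty => exact absurd hs (by simp)
  | @insert x s' hx ih =>
    rcases s'.eq_empty_or_nonempty with rfl | hne
    · refine ⟨x, Finset.mem_insert_self x ∅, fun k hk => ?_⟩
      rcases Finset.mem_insert.mp hk with rfl | hk'
      · exact P.le_refl k
      · exact absurd hk' (Finset.notMem_empty k)
    · obtain ⟨m, hm, hmax⟩ := ih hne
      rcases htot x m with h | h
      · refine ⟨m, Finset.mem_insert_of_mem hm, fun k hk => ?_⟩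
        rcases Finset.mem_insert.mp hk with rfl | hk'
        · exact h
        · exact hmax k hk'
      · refine ⟨x, Finset.mem_insert_self x s', fun k hk => ?_⟩
        rcases Finset.mem_insert.mp hk with rfl | hk'
        · exact P.le_refl k
        · exact P.le_trans _ _ _ (hmax k hk') h

lemma exists_top_supp {P : PartialOrder (Fin n)} (htot : ∀ i j : Fin n, P.le i j ∨ P.le j i)
    {u : Fin n → F} (hu : u ≠ 0) :
    ∃ i, u i ≠ 0 ∧ idealOf P u = dset P i := by
  have hne : (Finset.univ.filter fun j => u j ≠ 0).Nonempty := by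
    rcases Function.ne_iff.mp hu with ⟨i, hi⟩
    exact ⟨i, by simpa using hi⟩
  obtain ⟨i, hi, hmax⟩ := exists_top htot _ hne
  simp only [Finset.mem_filter, Finset.mem_univ, true_and] at hi hmax
  refine ⟨i, hi, ?_⟩
  ext j
  rw [mem_idealOf, mem_dset]
  constructor
  · rintro ⟨k, hk, hjk⟩
    exact P.le_trans _ _ _ hjk (hmax k hk)
  · intro hj
    exact ⟨i, hi, hj⟩

lemma ultra_aux {P : PartialOrder (Fin n)} {w : F → ℕ}
    (hna : ∀ a b : F, w (a + b) ≤ max (w a) (w b))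
    {s t : Fin n → F} {i is it : Fin n}
    (hi : (s + t) i ≠ 0) (hideal : idealOf P (s + t) = dset P i)
    (hs0 : s is ≠ 0) (hsideal : idealOf P s = dset P is)
    (ht0 : t it ≠ 0) (htideal : idealOf P t = dset P it)
    (hts : P.le it is) :
    posetWeight P w (s + t) ≤ max (posetWeight P w s) (posetWeight P w t) := by
  have pst := posetWeight_of_top (w := w) hideal
  have ps := posetWeight_of_top (w := w) hsideal
  have pt := posetWeight_of_top (w := w) htideal
  have hadd : (s + t) i = s i + t i := rfl
  have hile : P.le i is := by
    by_cases hsi : s i ≠ 0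
    · have : i ∈ idealOf P s := mem_idealOf.mpr ⟨i, hsi, P.le_refl i⟩
      rw [hsideal, mem_dset] at this; exact this
    · push_neg at hsi
      have hti : t i ≠ 0 := by
        intro h; apply hi; rw [hadd, hsi, h, add_zero]
      have : i ∈ idealOf P t := mem_idealOf.mpr ⟨i, hti, P.le_refl i⟩
      rw [htideal, mem_dset] at this
      exact P.le_trans _ _ _ this hts
  by_cases hii : i = is
  · subst hii
    rcases le_or_gt (w (s i + t i)) (w (s i)) with h | h
    · refine le_trans ?_ (le_max_left _ _)
      rw [pst, ps, hadd]
      omega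
    · have hle : w (s i + t i) ≤ w (t i) := by
        have := hna (s i) (t i); omega
      have hti : t i ≠ 0 := by
        intro h0; rw [h0, add_zero] at h; omega
      have hit : it = i := by
        have : i ∈ idealOf P t := mem_idealOf.mpr ⟨i, hti, P.le_refl i⟩
        rw [htideal, mem_dset] at this
        exact P.le_antisymm _ _ hts this
      subst hit
      refine le_trans ?_ (le_max_right _ _)
      rw [pst, pt, hadd]
      omega
  · have hlt : (dset P i).card < (dset P is).card := dset_card_lt hile hii
    have hci : 1 ≤ (dset P i).card := one_le_dset_card
    have hMw : w ((s + t) i) ≤ Mw w := w_le_Mw w _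
    refine le_trans ?_ (le_max_left _ _)
    rw [pst, ps]
    have h2 : Mw w * ((dset P i).card - 1) + Mw w ≤ Mw w * ((dset P is).card - 1) := by
      have h3 : (dset P i).card - 1 + 1 ≤ (dset P is).card - 1 := by omega
      calc Mw w * ((dset P i).card - 1) + Mw w
          = Mw w * ((dset P i).card - 1 + 1) := by ring
        _ ≤ Mw w * ((dset P is).card - 1) := Nat.mul_le_mul_left _ h3
    omega

lemma ultra {P : PartialOrder (Fin n)} {w : F → ℕ}
    (htot : ∀ i j : Fin n, P.le i j ∨ P.le j i)
    (hna : ∀ a b : F, w (a + b) ≤ max (w a) (w b)) (s t : Fin n → F) :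
    posetWeight P w (s + t) ≤ max (posetWeight P w s) (posetWeight P w t) := by
  by_cases hst : s + t = 0
  · rw [hst, posetWeight_zero]; exact Nat.zero_le _
  by_cases hs : s = 0
  · rw [hs, zero_add]; exact le_max_right _ _
  by_cases ht : t = 0
  · rw [ht, add_zero]; exact le_max_left _ _
  obtain ⟨i, hi, hideal⟩ := exists_top_supp htot hst
  obtain ⟨is, hs0, hsideal⟩ := exists_top_supp htot hs
  obtain ⟨it, ht0, htideal⟩ := exists_top_supp htot ht
  rcases htot it is with h | h
  · exact ultra_aux hna hi hideal hs0 hsideal ht0 htideal h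
  · rw [max_comm]
    rw [add_comm s t] at hi hideal ⊢
    exact ultra_aux hna hi hideal ht0 htideal hs0 hsideal h

lemma ultra_sub {P : PartialOrder (Fin n)} {w : F → ℕ} (hw : IsWeight w)
    (htot : ∀ i j : Fin n, P.le i j ∨ P.le j i)
    (hna : ∀ a b : F, w (a + b) ≤ max (w a) (w b)) (u v : Fin n → F) :
    posetWeight P w (u - v) ≤ max (posetWeight P w u) (posetWeight P w v) := by
  rw [sub_eq_add_neg]
  refine le_trans (ultra htot hna u (-v)) ?_
  rw [posetWeight_neg hw]

lemma dPoset_def (P : PartialOrder (Fin n)) (w : F → ℕ) (u v : Fin n → F) :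
    dPoset P w u v = posetWeight P w (u - v) := rfl

lemma mem_ballP {P : PartialOrder (Fin n)} {w : F → ℕ} {x v : Fin n → F} {r : ℕ} :
    v ∈ ballP P w x r ↔ dPoset P w x v ≤ r := by
  rw [ballP, Finset.mem_filter]
  exact ⟨fun h => h.2, fun h => ⟨Finset.mem_univ v, h⟩⟩

lemma diamP_le {P : PartialOrder (Fin n)} {w : F → ℕ} {A : Finset (Fin n → F)} {D : ℕ}
    (h : ∀ u ∈ A, ∀ v ∈ A, dPoset P w u v ≤ D) : diamP P w A ≤ D :=
  Finset.sup_le fun p hp => by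
    rw [Finset.mem_product] at hp; exact h _ hp.1 _ hp.2

lemma le_diamP {P : PartialOrder (Fin n)} {w : F → ℕ} {A : Finset (Fin n → F)} {u v : Fin n → F}
    (hu : u ∈ A) (hv : v ∈ A) : dPoset P w u v ≤ diamP P w A := by
  have hmem : (u, v) ∈ A ×ˢ A := by
    rw [Finset.mem_product]
    exact ⟨hu, hv⟩
  have := Finset.le_sup (f := fun p : (Fin n → F) × (Fin n → F) => dPoset P w p.1 p.2) hmem
  exact this

lemma posetWeight_pair {P : PartialOrder (Fin n)} {w : F → ℕ} {i j : Fin n}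
    (hij : ¬ P.le i j) (hji : ¬ P.le j i) {a b : F} (ha : a ≠ 0) (hb : b ≠ 0) :
    posetWeight P w (Pi.single i a + Pi.single j b) =
      w a + w b + Mw w * ((dset P i ∪ dset P j).card - 2) := by
  have hne : i ≠ j := fun h => hij (h ▸ P.le_refl i)
  set u : Fin n → F := Pi.single i a + Pi.single j b with hu
  have hui : u i = a := by
    rw [hu, Pi.add_apply, Pi.single_eq_same, Pi.single_eq_of_ne hne, add_zero]
  have huj : u j = b := by
    rw [hu, Pi.add_apply, Pi.single_eq_same, Pi.single_eq_of_ne hne.symm, zero_add]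
  have huk : ∀ k : Fin n, k ≠ i → k ≠ j → u k = 0 := by
    intro k hki hkj
    rw [hu, Pi.add_apply, Pi.single_eq_of_ne hki, Pi.single_eq_of_ne hkj, add_zero]
  have hideal : idealOf P u = dset P i ∪ dset P j := by
    ext k
    rw [mem_idealOf, Finset.mem_union, mem_dset, mem_dset]
    constructor
    · rintro ⟨l, hl, hkl⟩
      by_cases hli : l = i
      · exact Or.inl (hli ▸ hkl)
      by_cases hlj : l = j
      · exact Or.inr (hlj ▸ hkl)
      · exact absurd (huk l hli hlj) hl
    · rintro (h | h)
      · exact ⟨i, hui ▸ ha, h⟩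
      · exact ⟨j, huj ▸ hb, h⟩
  have hij_ideal : i ∈ idealOf P u := by
    rw [hideal]; exact Finset.mem_union_left _ self_mem_dset
  have hjj_ideal : j ∈ idealOf P u := by
    rw [hideal]; exact Finset.mem_union_right _ self_mem_dset
  have hmax : maxOf P u = {i, j} := by
    ext k
    simp only [maxOf, Finset.mem_filter, Finset.mem_insert, Finset.mem_singleton]
    constructor
    · rintro ⟨hk, hkmax⟩
      rw [hideal, Finset.mem_union, mem_dset, mem_dset] at hk
      rcases hk with h | h
      · exact Or.inl (hkmax i hij_ideal h)
      · exact Or.inr (hkmax j hjj_ideal h)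
    · rintro (rfl | rfl)
      · refine ⟨hij_ideal, fun l hl hkl => ?_⟩
        rw [hideal, Finset.mem_union, mem_dset, mem_dset] at hl
        rcases hl with h | h
        · exact P.le_antisymm _ _ hkl h
        · exact absurd (P.le_trans _ _ _ hkl h) hij
      · refine ⟨hjj_ideal, fun l hl hkl => ?_⟩
        rw [hideal, Finset.mem_union, mem_dset, mem_dset] at hl
        rcases hl with h | h
        · exact absurd (P.le_trans _ _ _ hkl h) hji
        · exact P.le_antisymm _ _ hkl h
  rw [posetWeight, hmax, hideal]
  have hsum : (∑ k ∈ ({i, j} : Finset (Fin n)), w (u k)) = w a + w b := by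
    rw [Finset.sum_pair hne, hui, huj]
  rw [hsum]
  congr 2
  rw [Finset.card_sdiff_of_subset]
  · rw [Finset.card_insert_of_notMem (by simpa using hne), Finset.card_singleton]
  · intro k hk
    rcases Finset.mem_insert.mp hk with rfl | hk'
    · exact Finset.mem_union_left _ self_mem_dset
    · rw [Finset.mem_singleton] at hk'
      exact hk' ▸ Finset.mem_union_right _ self_mem_dset

lemma exists_min_dset (P : PartialOrder (Fin n)) (hn : 1 ≤ n) :
    ∃ m : Fin n, dset P m = {m} := by
  obtain ⟨m, _, hm⟩ := Finset.exists_min_image Finset.univ (fun i => (dset P i).card)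
    ⟨⟨0, hn⟩, Finset.mem_univ _⟩
  refine ⟨m, ?_⟩
  ext k
  rw [mem_dset, Finset.mem_singleton]
  constructor
  · intro hk
    by_contra hne
    exact absurd (hm k (Finset.mem_univ k)) (Nat.not_le.mpr (dset_card_lt hk hne))
  · rintro rfl; exact P.le_refl k

end Helpers

lemma stmt19_auxA {F : Type*} [Field F] [Fintype F] {n : ℕ}
    {w : F → ℕ} (hw : IsWeight w) {P : PartialOrder (Fin n)}
    (H : ∀ x : Fin n → F, ∀ D : ℕ, (∃ y : Fin n → F, posetWeight P w y = D) →
      diamP P w (ballP P w x D) = D) :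
    ∀ i j : Fin n, ¬ P.le i j → ¬ P.le j i →
      (dset P j).card ≤ (dset P i).card → False := by
  intro i j hij hji hcard
  have hne : i ≠ j := fun h => hij (h ▸ P.le_refl i)
  have h1 : (1 : F) ≠ 0 := one_ne_zero
  have hn1 : (-1 : F) ≠ 0 := neg_ne_zero.mpr one_ne_zero
  set u : Fin n → F := Pi.single i (1 : F) with hu
  set v : Fin n → F := Pi.single j (1 : F) with hv
  set D := posetWeight P w u with hD
  have hpu : posetWeight P w u = w 1 + Mw w * ((dset P i).card - 1) :=
    posetWeight_single h1
  have hpv : posetWeight P w v = w 1 + Mw w * ((dset P j).card - 1) :=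
    posetWeight_single h1
  have hdiam := H 0 D ⟨u, rfl⟩
  have hu_mem : u ∈ ballP P w 0 D := by
    rw [mem_ballP, dPoset_def]
    rw [zero_sub, posetWeight_neg hw]
  have hv_mem : v ∈ ballP P w 0 D := by
    rw [mem_ballP, dPoset_def]
    rw [zero_sub, posetWeight_neg hw, hD, hpu, hpv]
    clear hij hji hne
    have : Mw w * ((dset P j).card - 1) ≤ Mw w * ((dset P i).card - 1) :=
      Nat.mul_le_mul_left _ (by omega)
    omega
  have huv : u - v = Pi.single i (1 : F) + Pi.single j (-1 : F) := by
    rw [hu, hv, sub_eq_add_neg, ← Pi.single_neg]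
  have hd : dPoset P w u v =
      w 1 + w 1 + Mw w * ((dset P i ∪ dset P j).card - 2) := by
    rw [dPoset_def]
    rw [huv, posetWeight_pair hij hji h1 hn1, hw.2.1 1]
  have hcup : (dset P i).card + 1 ≤ (dset P i ∪ dset P j).card := by
    have hsub : insert j (dset P i) ⊆ dset P i ∪ dset P j := by
      intro k hk
      rcases Finset.mem_insert.mp hk with rfl | hk'
      · exact Finset.mem_union_right _ self_mem_dset
      · exact Finset.mem_union_left _ hk'
    have hjni : j ∉ dset P i := fun h => hji (mem_dset.mp h)
    calc (dset P i).card + 1 = (insert j (dset P i)).card := by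
          rw [Finset.card_insert_of_notMem hjni]
      _ ≤ (dset P i ∪ dset P j).card := Finset.card_le_card hsub
  have hci : 1 ≤ (dset P i).card := one_le_dset_card
  have hmul : Mw w * ((dset P i).card - 1) ≤
      Mw w * ((dset P i ∪ dset P j).card - 2) :=
    Nat.mul_le_mul_left _ (by clear hij hji hne; omega)
  have hw1 : 1 ≤ w 1 := one_le_w hw h1
  have hle := le_diamP (P := P) (w := w) hu_mem hv_mem
  rw [hdiam, hd] at hle
  rw [hD, hpu] at hle
  clear hij hji hne
  omega

set_option maxHeartbeats 2000000 in
theorem stmt19 {F : Type*} [Field F] [Fintype F] {n : ℕ} (hn : 1 ≤ n)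
    (w : F → ℕ) (hw : IsWeight w) (P : PartialOrder (Fin n)) :
    (∀ x : Fin n → F, ∀ D : ℕ, (∃ y : Fin n → F, posetWeight P w y = D) →
      diamP P w (ballP P w x D) = D) ↔
    ((∀ i j : Fin n, P.le i j ∨ P.le j i) ∧
      ∀ a b : F, w (a + b) ≤ max (w a) (w b)) := by
  constructor
  · intro H
    constructor
    · by_contra hcon
      push_neg at hcon
      have key := stmt19_auxA hw H
      obtain ⟨i, j, hij, hji⟩ := hcon
      rcases le_total ((dset P j).card) ((dset P i).card) with h | h
      · exact key i j hij hji h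
      · exact key j i hji hij h
    · by_contra hcon
      push_neg at hcon
      obtain ⟨a, b, hab⟩ := hcon
      obtain ⟨m, hm⟩ := exists_min_dset P hn
      have hw0 : w 0 = 0 := (hw.1 0).mpr rfl
      have hsingle : ∀ c : F, c ≠ 0 → posetWeight P w (Pi.single m c) = w c := by
        intro c hc
        rw [posetWeight_single hc, hm, Finset.card_singleton]
        simp
      have key : ∀ a b : F, w b ≤ w a → max (w a) (w b) < w (a + b) → False := by
        intro a b hba hab
        rw [max_eq_left hba] at hab
        have ha : a ≠ 0 := by
          rintro rfl
          rw [zero_add] at hab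
          omega
        have hb : b ≠ 0 := by
          rintro rfl
          rw [add_zero] at hab
          omega
        have hab0 : a + b ≠ 0 := by
          intro h
          rw [h, hw0] at hab
          omega
        set D := w a with hD
        have hdiam := H 0 D ⟨Pi.single m a, hsingle a ha⟩
        have hu_mem : Pi.single m a ∈ ballP P w 0 D := by
          rw [mem_ballP, dPoset_def]
          rw [zero_sub, posetWeight_neg hw, hsingle a ha]
        have hv_mem : Pi.single m (-b) ∈ ballP P w 0 D := by
          rw [mem_ballP, dPoset_def]
          rw [zero_sub, posetWeight_neg hw, hsingle (-b) (neg_ne_zero.mpr hb), hw.2.1 b]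
          exact hba
        have hd : dPoset P w (Pi.single m a) (Pi.single m (-b)) = w (a + b) := by
          rw [dPoset_def]
          have heq : (Pi.single m a : Fin n → F) - Pi.single m (-b) = Pi.single m (a + b) := by
            rw [sub_eq_add_neg, ← Pi.single_neg, ← Pi.single_add, neg_neg]
          rw [heq, hsingle _ hab0]
        have hle := le_diamP (P := P) (w := w) hu_mem hv_mem
        rw [hdiam, hd] at hle
        omega
      rcases le_total (w b) (w a) with h | h
      · exact key a b h hab
      · exact key b a h (by rwa [add_comm, max_comm])
  · rintro ⟨htot, hna⟩ x D ⟨y, hy⟩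
    apply le_antisymm
    · apply diamP_le
      intro u hu v hv
      rw [mem_ballP, dPoset_def] at hu hv
      rw [dPoset_def]
      have heq : u - v = (x - v) - (x - u) := by ring
      rw [heq]
      refine le_trans (ultra_sub hw htot hna _ _) ?_
      exact max_le hv hu
    · have hx : x ∈ ballP P w x D := by
        rw [mem_ballP, dPoset_def]
        rw [sub_self, posetWeight_zero]
        exact Nat.zero_le _
      have hy' : x - y ∈ ballP P w x D := by
        rw [mem_ballP, dPoset_def]
        rw [sub_sub_cancel, hy]
      have hle := le_diamP (P := P) (w := w) hx hy'
      have hd : dPoset P w x (x - y) = D := by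
        rw [dPoset_def]
        rw [sub_sub_cancel, hy]
      rwa [hd] at hle
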